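/- arXiv:0912.1503 — 2 statements merged into one kernel-verified Lean document; each statement's English description precedes it below -/
import Mathlib

section
/- C_q(n, k, r) ≤ q^{n−k}·C_q(n−1, k−1, r−1) + C_q(n−1, k, r): there is a recursive construction of a q-covering design C_q[n,k,r] from a q-covering design C_q[n−1,k−1,r−1] and a q-covering design C_q[n−1,k,r]. -/
open Module

/-- Minimum size of a q-covering design C_q[n,k,r] over the field F. -/
noncomputable def covNum (F : Type) [Field F] [Fintype F] (n k r : ℕ) : ℕ :=
  sInf {m | ∃ S : Finset (Submodule F (Fin n → F)), S.card = m ∧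
    (∀ W ∈ S, finrank F W = k) ∧
    ∀ R : Submodule F (Fin n → F), finrank F R = r → ∃ W ∈ S, R ≤ W}

/-- Minimum size of a q-Turán design T_q[n,k,r] over the field F. -/
noncomputable def turNum (F : Type) [Field F] [Fintype F] (n k r : ℕ) : ℕ :=
  sInf {m | ∃ S : Finset (Submodule F (Fin n → F)), S.card = m ∧
    (∀ W ∈ S, finrank F W = r) ∧
    ∀ K : Submodule F (Fin n → F), finrank F K = k → ∃ W ∈ S, W ≤ K}

/-- Gaussian binomial coefficient [m choose r]_q, as the number of r-dimensional
subspaces of an m-dimensional space over F (with |F| = q). -/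
noncomputable def gaussBinom (F : Type) [Field F] [Fintype F] (m r : ℕ) : ℕ :=
  Nat.card {W : Submodule F (Fin m → F) // finrank F W = r}

section Helpers
variable {F : Type} [Field F] [Fintype F]
set_option linter.unusedSectionVars false

/-- Embedding of `Fin p → F` into `Fin (p+1) → F` by appending a zero coordinate. -/
def ext0 (F : Type) [Field F] (p : ℕ) : (Fin p → F) →ₗ[F] (Fin (p + 1) → F) where
  toFun g := Fin.snoc g 0
  map_add' g h := by
    ext i
    refine Fin.lastCases ?_ (fun j => ?_) i <;>
      simp [Fin.snoc_last, Fin.snoc_castSucc]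
  map_smul' c g := by
    ext i
    refine Fin.lastCases ?_ (fun j => ?_) i <;>
      simp [Fin.snoc_last, Fin.snoc_castSucc]

lemma ext0_injective (p : ℕ) : Function.Injective (ext0 F p) := by
  intro g h hgh
  ext i
  have := congrFun hgh (Fin.castSucc i)
  simpa [ext0, Fin.snoc_castSucc] using this

lemma ext0_last (p : ℕ) (g : Fin p → F) : ext0 F p g (Fin.last p) = 0 := by
  simp [ext0, Fin.snoc_last]

lemma ext0_castSucc (p : ℕ) (g : Fin p → F) (i : Fin p) :
    ext0 F p g (Fin.castSucc i) = g i := by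
  simp [ext0, Fin.snoc_castSucc]

lemma mem_range_ext0 {p : ℕ} {x : Fin (p + 1) → F} (hx : x (Fin.last p) = 0) :
    x ∈ LinearMap.range (ext0 F p) := by
  refine ⟨Fin.init x, ?_⟩
  show Fin.snoc (Fin.init x) 0 = x
  rw [← hx]
  exact Fin.snoc_init_self x

lemma finrank_map_ext0 {p : ℕ} (P : Submodule F (Fin p → F)) :
    finrank F (P.map (ext0 F p)) = finrank F P :=
  (LinearEquiv.finrank_eq (Submodule.equivMapOfInjective _ (ext0_injective p) P)).symm

lemma map_comap_ext0 {p : ℕ} {R : Submodule F (Fin (p + 1) → F)}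
    (hR : R ≤ LinearMap.range (ext0 F p)) :
    (R.comap (ext0 F p)).map (ext0 F p) = R := by
  rw [Submodule.map_comap_eq]
  exact inf_eq_right.mpr hR

lemma finrank_comap_ext0 {p : ℕ} {R : Submodule F (Fin (p + 1) → F)}
    (hR : R ≤ LinearMap.range (ext0 F p)) :
    finrank F (R.comap (ext0 F p)) = finrank F R := by
  conv_rhs => rw [← map_comap_ext0 hR]
  exact (finrank_map_ext0 _).symm

lemma finrank_sup_span {V : Type} [AddCommGroup V] [Module F V] [FiniteDimensional F V]
    {N : Submodule F V} {v : V} (hv : v ∉ N) :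
    finrank F ↥(N ⊔ F ∙ v) = finrank F N + 1 := by
  have hv0 : v ≠ 0 := fun h => hv (h ▸ N.zero_mem)
  have hd : N ⊓ (F ∙ v) = ⊥ :=
    ((Submodule.disjoint_span_singleton).mpr fun h => absurd h hv).eq_bot
  have := Submodule.finrank_sup_add_finrank_inf_eq N (F ∙ v)
  rw [hd, finrank_bot, add_zero, finrank_span_singleton hv0] at this
  exact this

lemma exists_extension {V : Type} [AddCommGroup V] [Module F V] [FiniteDimensional F V]
    (N : Submodule F V) (k : ℕ) (h1 : finrank F N ≤ k) (h2 : k ≤ finrank F V) :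
    ∃ W : Submodule F V, N ≤ W ∧ finrank F W = k := by
  obtain ⟨d, hd⟩ : ∃ d, finrank F N + d = k := ⟨k - finrank F N, by omega⟩
  clear h1
  induction d generalizing N with
  | zero => exact ⟨N, le_rfl, by omega⟩
  | succ d ih =>
    have hlt : finrank F N < finrank F V := by omega
    obtain ⟨m, hm⟩ := N.exists_of_finrank_lt hlt
    have hmN : m ∉ N := by simpa using hm 1 one_ne_zero
    obtain ⟨W, hW1, hW2⟩ := ih (N ⊔ F ∙ m) (by rw [finrank_sup_span hmN]; omega)
    exact ⟨W, le_trans le_sup_left hW1, hW2⟩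

lemma covNum_spec (m k r : ℕ) (hrk : r ≤ k) (hkm : k ≤ m) :
    ∃ S : Finset (Submodule F (Fin m → F)), S.card = covNum F m k r ∧
      (∀ W ∈ S, finrank F W = k) ∧
      ∀ R : Submodule F (Fin m → F), finrank F R = r → ∃ W ∈ S, R ≤ W := by
  classical
  haveI : Finite (Submodule F (Fin m → F)) :=
    Finite.of_injective (fun W => (W : Set (Fin m → F))) SetLike.coe_injective
  haveI : Fintype (Submodule F (Fin m → F)) := Fintype.ofFinite _
  have hne : {c | ∃ S : Finset (Submodule F (Fin m → F)), S.card = c ∧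
      (∀ W ∈ S, finrank F W = k) ∧
      ∀ R : Submodule F (Fin m → F), finrank F R = r → ∃ W ∈ S, R ≤ W}.Nonempty := by
    refine ⟨(Finset.univ.filter fun W : Submodule F (Fin m → F) => finrank F W = k).card,
      _, rfl, ?_, ?_⟩
    · intro W hW; exact (Finset.mem_filter.mp hW).2
    · intro R hR
      obtain ⟨W, hRW, hWk⟩ := exists_extension R k (by rw [hR]; exact hrk)
        (by rw [Module.finrank_fin_fun]; exact hkm)
      exact ⟨W, Finset.mem_filter.mpr ⟨Finset.mem_univ _, hWk⟩, hRW⟩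
  obtain ⟨S, h1, h2, h3⟩ := Nat.sInf_mem hne
  exact ⟨S, h1, h2, h3⟩

lemma covNum_le {m k r : ℕ} (S : Finset (Submodule F (Fin m → F)))
    (h2 : ∀ W ∈ S, finrank F W = k)
    (h3 : ∀ R : Submodule F (Fin m → F), finrank F R = r → ∃ W ∈ S, R ≤ W) :
    covNum F m k r ≤ S.card :=
  Nat.sInf_le ⟨S, rfl, h2, h3⟩

lemma covNum_recursive_upper_succ (p k r : ℕ) (hr1 : 1 ≤ r) (hrk : r ≤ k) (hkp : k ≤ p) :
    covNum F (p + 1) k r ≤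
      (Fintype.card F) ^ (p + 1 - k) * covNum F p (k - 1) (r - 1) + covNum F p k r := by
  classical
  obtain ⟨S1, hS1c, hS1d, hS1cov⟩ := covNum_spec (F := F) p (k-1) (r-1) (by omega) (by omega)
  obtain ⟨S2, hS2c, hS2d, hS2cov⟩ := covNum_spec (F := F) p k r hrk hkp
  set ι := ext0 F p with hι
  haveI qFin : ∀ P : Submodule F (Fin p → F), Finite ((Fin p → F) ⧸ P) :=
    fun P => Finite.of_surjective _ P.mkQ_surjective
  haveI : ∀ P : Submodule F (Fin p → F), Fintype ((Fin p → F) ⧸ P) :=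
    fun P => Fintype.ofFinite _
  let Wb : Submodule F (Fin p → F) → (Fin p → F) → Submodule F (Fin (p+1) → F) :=
    fun P β => P.map ι ⊔ (F ∙ (Fin.snoc β 1 : Fin (p+1) → F))
  let T : Finset (Submodule F (Fin (p+1) → F)) :=
    S1.biUnion fun P => Finset.univ.image fun x : (Fin p → F) ⧸ P => Wb P x.out
  let S : Finset (Submodule F (Fin (p+1) → F)) := T ∪ S2.image (Submodule.map ι)
  have snoc_not_mem : ∀ (P : Submodule F (Fin p → F)) (β : Fin p → F),
      (Fin.snoc β 1 : Fin (p+1) → F) ∉ P.map ι := by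
    intro P β h
    obtain ⟨g, hg, hg'⟩ := h
    have := congrFun hg' (Fin.last p)
    rw [hι, ext0_last] at this
    simp [Fin.snoc_last] at this
  have hWd : ∀ P ∈ S1, ∀ β, finrank F (Wb P β) = k := by
    intro P hP β
    show finrank F ↥(P.map ι ⊔ _) = k
    rw [finrank_sup_span (snoc_not_mem P β), finrank_map_ext0, hS1d P hP]
    omega
  have hSd : ∀ W ∈ S, finrank F W = k := by
    intro W hW
    rcases Finset.mem_union.mp hW with hW | hW
    · obtain ⟨P, hP, hW⟩ := Finset.mem_biUnion.mp hW
      obtain ⟨x, -, rfl⟩ := Finset.mem_image.mp hW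
      exact hWd P hP _
    · obtain ⟨W', hW', rfl⟩ := Finset.mem_image.mp hW
      rw [finrank_map_ext0, hS2d W' hW']
  have hScov : ∀ R : Submodule F (Fin (p+1) → F), finrank F R = r → ∃ W ∈ S, R ≤ W := by
    intro R hR
    by_cases hcase : ∀ x ∈ R, x (Fin.last p) = 0
    · have hRr : R ≤ LinearMap.range ι := fun x hx => mem_range_ext0 (hcase x hx)
      obtain ⟨W, hW, hle⟩ := hS2cov (R.comap ι) (by rw [finrank_comap_ext0 hRr, hR])
      refine ⟨W.map ι, Finset.mem_union_right _ (Finset.mem_image_of_mem _ hW), ?_⟩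
      rw [← map_comap_ext0 hRr]
      exact Submodule.map_mono hle
    · push_neg at hcase
      obtain ⟨u0, hu0R, hu0⟩ := hcase
      set u : Fin (p+1) → F := (u0 (Fin.last p))⁻¹ • u0 with hu_def
      have huR : u ∈ R := R.smul_mem _ hu0R
      have hul : u (Fin.last p) = 1 := by
        simp [hu_def, inv_mul_cancel₀ hu0]
      let ℓ : R →ₗ[F] F := (LinearMap.proj (Fin.last p)).comp R.subtype
      have hℓsurj : Function.Surjective ℓ := by
        intro c
        refine ⟨c • ⟨u, huR⟩, ?_⟩
        simp [ℓ, hul]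
      have hker : finrank F (LinearMap.ker ℓ) = r - 1 := by
        have h1 := LinearMap.finrank_range_add_finrank_ker ℓ
        rw [LinearMap.range_eq_top.mpr hℓsurj, finrank_top, Module.finrank_self, hR] at h1
        omega
      set R0 : Submodule F (Fin (p+1) → F) := (LinearMap.ker ℓ).map R.subtype with hR0
      have hR0fr : finrank F R0 = r - 1 := by
        rw [hR0, Submodule.finrank_map_subtype_eq]; exact hker
      have hR0last : ∀ x ∈ R0, x (Fin.last p) = 0 := by
        rintro x ⟨⟨yv, hyR⟩, hy, rfl⟩
        exact hy
      have hR0range : R0 ≤ LinearMap.range ι := fun x hx => mem_range_ext0 (hR0last x hx)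
      obtain ⟨P, hPS1, hPle⟩ := hS1cov (R0.comap ι)
        (by rw [finrank_comap_ext0 hR0range, hR0fr])
      have hR0P : R0 ≤ P.map ι := by
        rw [← map_comap_ext0 hR0range]; exact Submodule.map_mono hPle
      set β := Fin.init u with hβ
      set y := (Submodule.Quotient.mk β : (Fin p → F) ⧸ P).out with hy
      have hmk : (Submodule.Quotient.mk y : (Fin p → F) ⧸ P) = Submodule.Quotient.mk β := by
        rw [hy]
        exact Quotient.out_eq' _
      have hβy : β - y ∈ P := (Submodule.Quotient.eq P).mp hmk.symm
      refine ⟨Wb P y, ?_, ?_⟩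
      · exact Finset.mem_union_left _ (Finset.mem_biUnion.mpr ⟨P, hPS1,
          Finset.mem_image.mpr ⟨Submodule.Quotient.mk β, Finset.mem_univ _, rfl⟩⟩)
      · have hv : (Fin.snoc y 1 : Fin (p+1) → F) ∈ Wb P y :=
          Submodule.mem_sup_right (Submodule.mem_span_singleton_self _)
        have huW : u ∈ Wb P y := by
          have hdiff : u - Fin.snoc y 1 = ι (β - y) := by
            ext i
            refine Fin.lastCases ?_ (fun j => ?_) i
            · simp [hul, Fin.snoc_last, hι, ext0_last]
            · simp [Fin.snoc_castSucc, hι, ext0_castSucc, hβ, Fin.init]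
          have huu : u = ι (β - y) + Fin.snoc y 1 := by
            rw [← hdiff]; abel
          rw [huu]
          exact (Wb P y).add_mem
            (Submodule.mem_sup_left (Submodule.mem_map_of_mem hβy)) hv
        intro x hx
        have hz : x - x (Fin.last p) • u ∈ R0 := by
          refine ⟨⟨x - x (Fin.last p) • u, R.sub_mem hx (R.smul_mem _ huR)⟩, ?_, rfl⟩
          show ((x - x (Fin.last p) • u) : Fin (p+1) → F) (Fin.last p) = 0
          simp [hul]
        have hfin := (Wb P y).add_mem (Submodule.mem_sup_left (hR0P hz) : _)
          ((Wb P y).smul_mem (x (Fin.last p)) huW)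
        simpa using hfin
  have hTcard : T.card ≤ (Fintype.card F) ^ (p + 1 - k) * covNum F p (k-1) (r-1) := by
    calc T.card ≤ ∑ P ∈ S1, (Finset.univ.image fun x : (Fin p → F) ⧸ P => Wb P x.out).card :=
        Finset.card_biUnion_le
      _ ≤ ∑ _P ∈ S1, (Fintype.card F) ^ (p + 1 - k) := by
          apply Finset.sum_le_sum
          intro P hP
          calc (Finset.univ.image fun x : (Fin p → F) ⧸ P => Wb P x.out).card
              ≤ (Finset.univ : Finset ((Fin p → F) ⧸ P)).card := Finset.card_image_le
            _ = Fintype.card ((Fin p → F) ⧸ P) := Finset.card_univ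
            _ = (Fintype.card F) ^ finrank F ((Fin p → F) ⧸ P) :=
                card_eq_pow_finrank (K := F)
            _ = (Fintype.card F) ^ (p + 1 - k) := by
                congr 1
                have h1 := P.finrank_quotient_add_finrank
                rw [hS1d P hP, Module.finrank_fin_fun] at h1
                omega
      _ = S1.card * (Fintype.card F) ^ (p+1-k) := by
          rw [Finset.sum_const, smul_eq_mul]
      _ = _ := by rw [hS1c]; ring
  calc covNum F (p + 1) k r ≤ S.card := covNum_le S hSd hScov
    _ ≤ T.card + (S2.image (Submodule.map ι)).card := Finset.card_union_le _ _
    _ ≤ (Fintype.card F) ^ (p + 1 - k) * covNum F p (k-1) (r-1) + S2.card :=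
        Nat.add_le_add hTcard Finset.card_image_le
    _ = _ := by rw [hS2c]

end Helpers

theorem covNum_recursive_upper (F : Type) [Field F] [Fintype F] (n k r : ℕ)
    (hr1 : 1 ≤ r) (hrk : r ≤ k) (hkn : k < n) :
    covNum F n k r ≤
      (Fintype.card F) ^ (n - k) * covNum F (n - 1) (k - 1) (r - 1)
        + covNum F (n - 1) k r := by
  obtain ⟨p, rfl⟩ : ∃ p, n = p + 1 := ⟨n - 1, by omega⟩
  simpa using covNum_recursive_upper_succ p k r hr1 hrk (by omega)
end

section
/- C_q(n, k, r) ≤ [n−k+r choose r]_q for 0 ≤ r ≤ k ≤ n. -/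
open Module

/-- Any subspace of dimension at most `r` is contained in a subspace of dimension exactly `r`,
provided `r` is at most the dimension of the ambient space. -/
lemma exists_superspace {F V : Type*} [Field F] [AddCommGroup V] [Module F V]
    [FiniteDimensional F V] (r : ℕ) (N : Submodule F V)
    (h1 : finrank F N ≤ r) (h2 : r ≤ finrank F V) :
    ∃ U : Submodule F V, N ≤ U ∧ finrank F U = r := by
  obtain ⟨d, hd⟩ := Nat.exists_eq_add_of_le h1
  induction d generalizing N with
  | zero => exact ⟨N, le_rfl, by omega⟩
  | succ d ih =>
    have hlt : finrank F N < finrank F V := by omega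
    obtain ⟨m, hm⟩ := Submodule.exists_of_finrank_lt N hlt
    have hmN : m ∉ N := by simpa using hm 1 one_ne_zero
    have hm0 : m ≠ 0 := by rintro rfl; exact hmN N.zero_mem
    have hinf : N ⊓ (F ∙ m) = ⊥ := by
      refine eq_bot_iff.mpr fun x hx => ?_
      obtain ⟨hxN, hxs⟩ := Submodule.mem_inf.mp hx
      obtain ⟨c, rfl⟩ := Submodule.mem_span_singleton.mp hxs
      rcases eq_or_ne c 0 with rfl | hc
      · simp
      · exact absurd hxN (hm c hc)
    have hrank : finrank F ↥(N ⊔ (F ∙ m)) = finrank F N + 1 := by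
      have := Submodule.finrank_sup_add_finrank_inf_eq N (F ∙ m)
      rw [hinf, finrank_bot, finrank_span_singleton hm0] at this
      omega
    obtain ⟨U, hNU, hU⟩ := ih (N ⊔ (F ∙ m)) (by omega) (by omega)
    exact ⟨U, le_trans le_sup_left hNU, hU⟩

theorem covNum_upper_bound (F : Type) [Field F] [Fintype F] (n k r : ℕ)
    (hr : r ≤ k) (hk : k ≤ n) :
    covNum F n k r ≤ gaussBinom F (n - k + r) r := by
  set m := n - k + r with hm
  have hmn : m ≤ n := by omega
  set f : (Fin n → F) →ₗ[F] (Fin m → F) :=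
    LinearMap.funLeft F F (Fin.castLE hmn) with hf
  have hfsurj : Function.Surjective f :=
    LinearMap.funLeft_surjective_of_injective F F _ (Fin.castLE_injective hmn)
  haveI : DecidableEq (Submodule F (Fin n → F)) := Classical.decEq _
  haveI : Fintype {W : Submodule F (Fin m → F) // finrank F W = r} := Fintype.ofFinite _
  set S : Finset (Submodule F (Fin n → F)) :=
    Finset.univ.image
      (fun U : {W : Submodule F (Fin m → F) // finrank F W = r} => Submodule.comap f U.1)
    with hS
  have hcomap_inj : Function.Injective (Submodule.comap f) :=
    Submodule.comap_injective_of_surjective hfsurj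
  have hcard : S.card = gaussBinom F m r := by
    rw [hS, Finset.card_image_of_injective _ (fun a b hab => Subtype.ext (hcomap_inj hab)),
      Finset.card_univ, gaussBinom, Nat.card_eq_fintype_card]
  have hdim : ∀ W ∈ S, finrank F W = k := by
    intro W hW
    rw [hS, Finset.mem_image] at hW
    obtain ⟨U, -, rfl⟩ := hW
    have hker : LinearMap.ker ((U.1).mkQ.comp f) = Submodule.comap f U.1 := by
      ext x; simp [LinearMap.mem_ker, Submodule.Quotient.mk_eq_zero]
    have hrange : LinearMap.range ((U.1).mkQ.comp f) = ⊤ := by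
      rw [LinearMap.range_comp, LinearMap.range_eq_top.mpr hfsurj, Submodule.map_top,
        Submodule.range_mkQ]
    have hrn := LinearMap.finrank_range_add_finrank_ker ((U.1).mkQ.comp f)
    rw [hker, hrange, finrank_top] at hrn
    have hq : finrank F ((Fin m → F) ⧸ U.1) + finrank F U.1 = finrank F (Fin m → F) :=
      Submodule.finrank_quotient_add_finrank U.1
    have h1 : finrank F (Fin m → F) = m := Module.finrank_fin_fun F
    have h2 : finrank F (Fin n → F) = n := Module.finrank_fin_fun F
    rw [h2] at hrn
    rw [h1] at hq
    have := U.2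
    omega
  have hcover : ∀ R : Submodule F (Fin n → F), finrank F R = r → ∃ W ∈ S, R ≤ W := by
    intro R hR
    have hRle : finrank F (R.map f) ≤ r := hR ▸ Submodule.finrank_map_le f R
    have hrm : r ≤ finrank F (Fin m → F) := by rw [Module.finrank_fin_fun]; omega
    obtain ⟨U, hRU, hU⟩ := exists_superspace r (R.map f) hRle hrm
    refine ⟨Submodule.comap f U, ?_, ?_⟩
    · rw [hS, Finset.mem_image]
      exact ⟨⟨U, hU⟩, Finset.mem_univ _, rfl⟩
    · exact le_trans (Submodule.le_comap_map f R) (Submodule.comap_mono hRU)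
  exact Nat.sInf_le ⟨S, hcard, hdim, hcover⟩
end
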